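/- Let G=(V,E) be a graph with positive edge lengths ℓ and let D=(V,K) be the demand graph with edge weights given by the distance demands δ. Define the metric terminal pairs K' = {(u,v) ∈ K : the shortest uv-path distance in D−(u,v) with respect to δ is strictly greater than δ(u,v)}. Then a subgraph H=(V,E') satisfies d_H^ℓ(u,v) ≤ δ(u,v) for all (u,v) ∈ K if and only if it satisfies d_H^ℓ(u,v) ≤ δ(u,v) for all (u,v) ∈ K'. -/
import Mathlib


/-- Walks in a (directed) graph given by an adjacency relation `E`:
`IsWalk E u v p` means `p` is the list of successive vertices visited after `u`
on a walk from `u` to `v` all of whose steps are edges of `E`. -/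
def IsWalk {V : Type*} (E : V → V → Prop) : V → V → List V → Prop
  | u, v, [] => u = v
  | u, v, w :: rest => E u w ∧ IsWalk E w v rest

/-- Total length of the walk starting at `u` and visiting the vertices in `p`,
with respect to the length function `ℓ`. -/
def walkLen {V : Type*} (ℓ : V → V → ℚ) : V → List V → ℚ
  | _, [] => 0
  | u, w :: rest => ℓ u w + walkLen ℓ w rest

/-- `DistLE E ℓ u v d` : the shortest-path distance from `u` to `v` w.r.t. `ℓ`
in the graph with edge relation `E` is at most `d` (in particular, finite). -/
def DistLE {V : Type*} (E : V → V → Prop) (ℓ : V → V → ℚ) (u v : V) (d : ℚ) : Prop :=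
  ∃ p : List V, IsWalk E u v p ∧ walkLen ℓ u p ≤ d

lemma isWalk_append {V : Type*} {E : V → V → Prop} (L : V → V → ℚ) :
    ∀ (p : List V) (u v w : V) (q : List V), IsWalk E u v p → IsWalk E v w q →
      IsWalk E u w (p ++ q) ∧ walkLen L u (p ++ q) = walkLen L u p + walkLen L v q := by
  intro p
  induction p with
  | nil =>
    intro u v w q hp hq
    have : u = v := hp
    subst this
    exact ⟨hq, by simp [walkLen]⟩
  | cons a rest ih =>
    intro u v w q hp hq
    obtain ⟨h1, h2⟩ := hp
    obtain ⟨hw, hl⟩ := ih a v w q h2 hq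
    refine ⟨⟨h1, hw⟩, ?_⟩
    show L u a + walkLen L a (rest ++ q) = L u a + walkLen L a rest + walkLen L v q
    rw [hl]; ring

lemma distLE_trans {V : Type*} {E : V → V → Prop} {L : V → V → ℚ} {u v w : V} {d1 d2 : ℚ}
    (h1 : DistLE E L u v d1) (h2 : DistLE E L v w d2) : DistLE E L u w (d1 + d2) := by
  obtain ⟨p, hp, hlp⟩ := h1
  obtain ⟨q, hq, hlq⟩ := h2
  obtain ⟨hw, hl⟩ := isWalk_append L p u v w q hp hq
  exact ⟨p ++ q, hw, by rw [hl]; exact add_le_add hlp hlq⟩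

lemma distLE_mono {V : Type*} {E : V → V → Prop} {L : V → V → ℚ} {u v : V} {d d' : ℚ}
    (hdd : d ≤ d') (h : DistLE E L u v d) : DistLE E L u v d' := by
  obtain ⟨p, hp, hlp⟩ := h
  exact ⟨p, hp, hlp.trans hdd⟩

lemma walkLen_nonneg {V : Type*} {R : V → V → Prop} {L : V → V → ℚ}
    (hpos : ∀ a b, R a b → 0 < L a b) :
    ∀ (p : List V) (u v : V), IsWalk R u v p → 0 ≤ walkLen L u p := by
  intro p
  induction p with
  | nil => intro u v _; simp [walkLen]
  | cons a rest ih =>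
    intro u v hp
    have h1 := hpos u a hp.1
    have h2 := ih a v hp.2
    simp only [walkLen]
    linarith

/-- Key auxiliary lemma: if every demand pair with value `< B` is satisfied in `H = (V,E')`,
then any walk in the demand graph with total length `+ c ≤ B` (with `c > 0`) yields a
corresponding distance bound in `H`. -/
lemma aux_walk {V : Type*} (E' K : Set (V × V)) (ℓ δ : V × V → ℚ) (B : ℚ) (e : V × V)
    (hδpos : ∀ f ∈ K, 0 < δ f)
    (H : ∀ f ∈ K, δ f < B →
      DistLE (fun a b => (a, b) ∈ E') (fun a b => ℓ (a, b)) f.1 f.2 (δ f)) :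
    ∀ (p : List V) (u v : V) (c : ℚ), 0 < c →
      IsWalk (fun a b => (a, b) ∈ K ∧ (a, b) ≠ e) u v p →
      walkLen (fun a b => δ (a, b)) u p + c ≤ B →
      DistLE (fun a b => (a, b) ∈ E') (fun a b => ℓ (a, b)) u v
        (walkLen (fun a b => δ (a, b)) u p) := by
  intro p
  induction p with
  | nil =>
    intro u v c _ hp _
    have : u = v := hp
    subst this
    exact ⟨[], rfl, le_refl _⟩
  | cons a rest ih =>
    intro u v c hc hp hlen
    obtain ⟨⟨hK1, _⟩, hrest⟩ := hp
    have hrnn : 0 ≤ walkLen (fun a b => δ (a, b)) a rest :=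
      walkLen_nonneg (fun x y hxy => hδpos (x, y) hxy.1) rest a v hrest
    simp only [walkLen] at hlen ⊢
    have hpos1 : 0 < δ (u, a) := hδpos (u, a) hK1
    have hδlt : δ (u, a) < B := by linarith
    have D1 := H (u, a) hK1 hδlt
    have D2 := ih a v (c + δ (u, a)) (by linarith) hrest (by linarith)
    exact distLE_trans D1 D2

/-- a subgraph `H = (V, E')` satisfies all distance demands for the
terminal pairs `K` iff it satisfies them for the metric terminal pairs `K'`. -/
theorem metric_terminal_pairs_suffice
    {V : Type*} [Fintype V]
    (E : Set (V × V)) (K : Set (V × V))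
    (ℓ : V × V → ℚ) (δ : V × V → ℚ)
    (hℓpos : ∀ e ∈ E, 0 < ℓ e) (hδpos : ∀ e ∈ K, 0 < δ e)
    (E' : Set (V × V)) (hE' : E' ⊆ E)
    (K' : Set (V × V))
    (hK' : K' = {e ∈ K |
      ¬ DistLE (fun a b => (a, b) ∈ K ∧ (a, b) ≠ e) (fun a b => δ (a, b))
        e.1 e.2 (δ e)}) :
    (∀ e ∈ K, DistLE (fun a b => (a, b) ∈ E') (fun a b => ℓ (a, b)) e.1 e.2 (δ e)) ↔
    (∀ e ∈ K', DistLE (fun a b => (a, b) ∈ E') (fun a b => ℓ (a, b)) e.1 e.2 (δ e)) := by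
  subst hK'
  constructor
  · intro h e he
    exact h e he.1
  · intro h
    classical
    let m : V × V → ℕ := fun f =>
      (Finset.univ.filter (fun g : V × V => g ∈ K ∧ δ g < δ f)).card
    suffices main : ∀ n (e : V × V), e ∈ K → m e < n →
        DistLE (fun a b => (a, b) ∈ E') (fun a b => ℓ (a, b)) e.1 e.2 (δ e) by
      intro e he
      exact main (m e + 1) e he (Nat.lt_succ_self _)
    intro n
    induction n with
    | zero => intro e _ hme; omega
    | succ n ih =>
      intro e he hme
      by_cases hK'e : ¬ DistLE (fun a b => (a, b) ∈ K ∧ (a, b) ≠ e)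
          (fun a b => δ (a, b)) e.1 e.2 (δ e)
      · exact h e ⟨he, hK'e⟩
      · obtain ⟨p, hwalk, hlen⟩ := not_not.mp hK'e
        have H : ∀ f ∈ K, δ f < δ e →
            DistLE (fun a b => (a, b) ∈ E') (fun a b => ℓ (a, b)) f.1 f.2 (δ f) := by
          intro f hf hδf
          refine ih f hf ?_
          have hss : (Finset.univ.filter (fun g : V × V => g ∈ K ∧ δ g < δ f)) ⊂
              (Finset.univ.filter (fun g : V × V => g ∈ K ∧ δ g < δ e)) := by
            refine Finset.ssubset_iff_of_subset ?_ |>.mpr ?_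
            · intro g hg
              simp only [Finset.mem_filter, Finset.mem_univ, true_and] at hg ⊢
              exact ⟨hg.1, hg.2.trans hδf⟩
            · refine ⟨f, ?_, ?_⟩
              · simp only [Finset.mem_filter, Finset.mem_univ, true_and]
                exact ⟨hf, hδf⟩
              · simp only [Finset.mem_filter, Finset.mem_univ, true_and, not_and]
                intro _
                exact lt_irrefl _
          have := Finset.card_lt_card hss
          simp only [m] at hme ⊢
          omega
        match p, hwalk, hlen with
        | [], hwalk, hlen =>
          have heq : e.1 = e.2 := hwalk
          exact ⟨[], heq, by simp [walkLen]; exact le_of_lt (hδpos e he)⟩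
        | [w], hwalk, hlen =>
          have hw2 : w = e.2 := hwalk.2
          subst hw2
          exact absurd rfl hwalk.1.2
        | w :: b :: rest, hwalk, hlen =>
          obtain ⟨⟨hK1, _⟩, hrest⟩ := hwalk
          have hrnn : 0 ≤ walkLen (fun a b => δ (a, b)) b rest :=
            walkLen_nonneg (fun x y hxy => hδpos (x, y) hxy.1) rest b e.2 hrest.2
          have hbpos : 0 < δ (w, b) := hδpos (w, b) hrest.1.1
          simp only [walkLen] at hlen
          have hδ1pos : 0 < δ (e.1, w) := hδpos (e.1, w) hK1
          have hδlt : δ (e.1, w) < δ e := by linarith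
          have D1 := H (e.1, w) hK1 hδlt
          have D2 := aux_walk E' K ℓ δ (δ e) e hδpos H (b :: rest) w e.2
            (δ (e.1, w)) hδ1pos hrest (by simp only [walkLen]; linarith)
          refine distLE_mono ?_ (distLE_trans D1 D2)
          simp only [walkLen]
          linarith
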